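/- Let k be a field, n ≥ 1, G a group, and m : {1,…,n−1} → G any map. Then there exists a grading (X^g)_{g∈G} of the matrix algebra M_n(k) by G in which every elementary matrix E_{ji} is homogeneous, with deg E_{ii} = 1 for all i, deg E_{ji} = m(j−1)·m(j−2)⋯m(i) for j > i, and deg E_{ji} = (m(i−1)⋯m(j))^{-1} for j < i. Moreover this grading is connected if and only if the image of m generates G. -/

import Mathlib

open Matrix

/-- Cumulative product: `degAux m j = m (j-1) * m (j-2) * ⋯ * m 0`, so that
`degAux m j * (degAux m i)⁻¹ = m (j-1) ⋯ m i` for `j > i`,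
`= (m (i-1) ⋯ m j)⁻¹` for `j < i`, and `= 1` for `j = i`. -/
def degAux {G : Type*} [Group G] (m : ℕ → G) : ℕ → G
  | 0 => 1
  | (j + 1) => m j * degAux m j

/-- For any field `k`, `n ≥ 1`, group `G` and map `m : {1,…,n-1} → G`, there exists a good
grading of `M_n(k)` by `G` with `deg E_{ji} = m(j−1)⋯m(i)` for `j > i`,
`deg E_{ji} = (m(i−1)⋯m(j))⁻¹` for `j < i` and `deg E_{ii} = 1`; it is connected iff the
image of `m` generates `G`. -/
theorem stmt2 (k : Type*) [Field k] (n : ℕ) (hn : 1 ≤ n) (G : Type*) [Group G]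
    (m : Fin (n - 1) → G) :
    ∃ X : G → Submodule k (Matrix (Fin n) (Fin n) k),
      iSupIndep X ∧ (⨆ g, X g) = ⊤ ∧
      (∀ g h, X g * X h ≤ X (g * h)) ∧
      (∀ i j : Fin n,
        Matrix.single j i (1 : k) ∈
          X (degAux (fun t => if h : t < n - 1 then m ⟨t, h⟩ else 1) (j : ℕ) *
            (degAux (fun t => if h : t < n - 1 then m ⟨t, h⟩ else 1) (i : ℕ))⁻¹)) ∧
      (Subgroup.closure {g | X g ≠ ⊥} = ⊤ ↔ Subgroup.closure (Set.range m) = ⊤) := by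
  classical
  set m' : ℕ → G := fun t => if h : t < n - 1 then m ⟨t, h⟩ else 1 with hm'
  set d : ℕ → G := degAux m' with hd
  set X : G → Submodule k (Matrix (Fin n) (Fin n) k) := fun g =>
    { carrier := {M | ∀ j i : Fin n, d (j : ℕ) * (d (i : ℕ))⁻¹ ≠ g → M j i = 0}
      add_mem' := fun ha hb j i h => by
        simp only [Matrix.add_apply, ha j i h, hb j i h, add_zero]
      zero_mem' := fun j i _ => rfl
      smul_mem' := fun c a ha j i h => by
        simp only [Matrix.smul_apply, ha j i h, smul_zero] } with hXdef
  have hmem : ∀ (g : G) (M : Matrix (Fin n) (Fin n) k),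
      M ∈ X g ↔ ∀ j i : Fin n, d (j : ℕ) * (d (i : ℕ))⁻¹ ≠ g → M j i = 0 :=
    fun g M => Iff.rfl
  have hstd : ∀ (j i : Fin n) (c : k),
      single j i c ∈ X (d (j : ℕ) * (d (i : ℕ))⁻¹) := by
    intro j i c
    rw [hmem]
    intro j' i' h
    simp only [Matrix.single, Matrix.of_apply, ite_eq_right_iff]
    rintro ⟨rfl, rfl⟩
    exact absurd rfl h
  refine ⟨X, ?_, ?_, ?_, fun i j => hstd j i 1, ?_⟩
  · -- iSupIndep
    intro g
    -- complementary submodule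
    set Y : Submodule k (Matrix (Fin n) (Fin n) k) :=
      { carrier := {M | ∀ j i : Fin n, d (j : ℕ) * (d (i : ℕ))⁻¹ = g → M j i = 0}
        add_mem' := fun ha hb j i h => by
          simp only [Matrix.add_apply, ha j i h, hb j i h, add_zero]
        zero_mem' := fun j i _ => rfl
        smul_mem' := fun c a ha j i h => by
          simp only [Matrix.smul_apply, ha j i h, smul_zero] } with hY
    have hXY : ∀ h : G, h ≠ g → X h ≤ Y := by
      intro h hh M hM j i hji
      exact hM j i (by rw [hji]; exact hh.symm)
    have hsup : (⨆ (h) (_ : h ≠ g), X h) ≤ Y :=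
      iSup_le fun h => iSup_le fun hh => hXY h hh
    refine Disjoint.mono_right hsup ?_
    rw [disjoint_iff, Submodule.eq_bot_iff]
    rintro M ⟨hM1, hM2⟩
    ext j i
    by_cases hji : d (j : ℕ) * (d (i : ℕ))⁻¹ = g
    · exact hM2 j i hji
    · exact hM1 j i hji
  · -- iSup = ⊤
    rw [eq_top_iff]
    intro M _
    rw [matrix_eq_sum_single M]
    refine Submodule.sum_mem _ fun j _ => Submodule.sum_mem _ fun i _ => ?_
    exact Submodule.mem_iSup_of_mem (d (j : ℕ) * (d (i : ℕ))⁻¹) (hstd j i (M j i))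
  · -- multiplicativity
    intro g h
    rw [Submodule.mul_le]
    intro a ha b hb
    rw [hmem]
    intro j i hji
    rw [Matrix.mul_apply]
    refine Finset.sum_eq_zero fun l _ => ?_
    by_cases hl : d (j : ℕ) * (d (l : ℕ))⁻¹ = g
    · have : d (l : ℕ) * (d (i : ℕ))⁻¹ ≠ h := by
        intro hli
        apply hji
        rw [← hl, ← hli]
        group
      rw [hb l i this, mul_zero]
    · rw [ha j l hl, zero_mul]
  · -- connectedness
    have hne : {g | X g ≠ ⊥} = {g | ∃ j i : Fin n, d (j : ℕ) * (d (i : ℕ))⁻¹ = g} := by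
      ext g
      simp only [Set.mem_setOf_eq]
      constructor
      · intro hg
        by_contra hcon
        push_neg at hcon
        apply hg
        rw [Submodule.eq_bot_iff]
        intro M hM
        ext j i
        exact hM j i (hcon j i)
      · rintro ⟨j, i, rfl⟩ hbot
        have h1 : single j i (1 : k) = 0 := by
          rw [Submodule.eq_bot_iff] at hbot
          exact hbot _ (hstd j i 1)
        have := congrFun (congrFun h1 j) i
        simp [Matrix.single] at this
    have hdmem : ∀ t : ℕ, d t ∈ Subgroup.closure (Set.range m) := by
      intro t
      induction t with
      | zero => exact Subgroup.one_mem _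
      | succ t ih =>
        have : d (t + 1) = m' t * d t := rfl
        rw [this]
        refine Subgroup.mul_mem _ ?_ ih
        by_cases ht : t < n - 1
        · simp only [hm', ht, dif_pos]
          exact Subgroup.subset_closure ⟨⟨t, ht⟩, rfl⟩
        · simp only [hm', ht, dif_neg, not_false_iff]
          exact Subgroup.one_mem _
    have hcleq : Subgroup.closure {g | X g ≠ ⊥} = Subgroup.closure (Set.range m) := by
      rw [hne]
      apply le_antisymm
      · rw [Subgroup.closure_le]
        rintro g ⟨j, i, rfl⟩
        exact Subgroup.mul_mem _ (hdmem _) (Subgroup.inv_mem _ (hdmem _))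
      · rw [Subgroup.closure_le]
        rintro g ⟨t, rfl⟩
        have ht1 : (t : ℕ) + 1 < n := by omega
        have ht2 : (t : ℕ) < n := by omega
        refine Subgroup.subset_closure ⟨⟨(t : ℕ) + 1, ht1⟩, ⟨(t : ℕ), ht2⟩, ?_⟩
        show d ((t : ℕ) + 1) * (d (t : ℕ))⁻¹ = m t
        have : d ((t : ℕ) + 1) = m' (t : ℕ) * d (t : ℕ) := rfl
        rw [this, mul_inv_cancel_right]
        simp only [hm', t.isLt, dif_pos]
    rw [hcleq]
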